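/- For every n ≥ 2 there is a constant c_n > 0 with the following property: for every L > 0 and every nonnegative Lipschitz function f : S^{n−1} → ℝ with Lipschitz constant at most L (with respect to the Euclidean distance of ℝⁿ restricted to the sphere), if δ = sup_{u ∈ S^{n−1}} f(u) satisfies δ ≤ L, then ∫_{S^{n−1}} f dH^{n−1} ≥ c_n · δⁿ / L^{n−1}. (The spherical bump estimate underlying the proof of Lemma 3.1: a Lipschitz function attaining a maximum δ dominates the cone function u ↦ max{0, δ − L‖u − u*‖}.) -/

import Mathlib

open MeasureTheory Set Pointwise
open scoped RealInnerProductSpace ENNReal NNReal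

noncomputable section

open Module

section Aux
variable {n : ℕ}

lemma emb_exists (hn : 2 ≤ n) (v : EuclideanSpace ℝ (Fin n)) (hv : ‖v‖ = 1) :
    ∃ T : EuclideanSpace ℝ (Fin (n-1)) →ₗᵢ[ℝ] EuclideanSpace ℝ (Fin n),
      (∀ w, ⟪v, T w⟫ = 0) ∧ ∀ x, ⟪v, x⟫ = 0 → ∃ w, T w = x := by
  set K := (ℝ ∙ v)ᗮ
  have hv0 : v ≠ 0 := by intro h; rw [h] at hv; simp at hv
  have hfact : Fact (finrank ℝ (EuclideanSpace ℝ (Fin n)) = (n-1) + 1) :=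
    ⟨by rw [finrank_euclideanSpace_fin]; omega⟩
  have hrk : finrank ℝ K = n - 1 := Submodule.finrank_orthogonal_span_singleton hv0
  let b : OrthonormalBasis (Fin (n-1)) ℝ K :=
    (stdOrthonormalBasis ℝ K).reindex (finCongr hrk)
  refine ⟨K.subtypeₗᵢ.comp b.repr.symm.toLinearIsometry, fun w => ?_, fun x hx => ?_⟩
  · have : ((b.repr.symm w : K) : EuclideanSpace ℝ (Fin n)) ∈ K := (b.repr.symm w).2
    exact (Submodule.mem_orthogonal_singleton_iff_inner_right).1 this
  · have hxK : x ∈ K := (Submodule.mem_orthogonal_singleton_iff_inner_right).2 hx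
    exact ⟨b.repr ⟨x, hxK⟩, by simp⟩

lemma haarE' (m : ℕ) :
    (μH[(m:ℝ)] : Measure (EuclideanSpace ℝ (Fin m))).IsAddHaarMeasure := by
  have h : (m:ℝ) = (finrank ℝ (EuclideanSpace ℝ (Fin m)) : ℝ) := by
    rw [finrank_euclideanSpace_fin]
  rw [h]; infer_instance

lemma hd_cast (hn : 2 ≤ n) : ((n:ℝ) - 1) = ((n-1 : ℕ) : ℝ) := by
  have : (1:ℕ) ≤ n := by omega
  push_cast [Nat.cast_sub this]
  ring

lemma pyth {v x : EuclideanSpace ℝ (Fin n)} (hv : ‖v‖ = 1) (hx : ⟪v, x⟫ = 0) (t : ℝ) :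
    ‖x + t • v‖ ^ 2 = ‖x‖ ^ 2 + t ^ 2 := by
  rw [norm_add_sq_real]
  have h1 : ⟪x, t • v⟫ = 0 := by
    rw [real_inner_smul_right, real_inner_comm, hx, mul_zero]
  have h2 : ‖t • v‖ = |t| := by rw [norm_smul, hv, mul_one, Real.norm_eq_abs]
  rw [h1, h2, sq_abs]; ring

lemma sqrt_diff_le {a b m : ℝ} (hm : 0 < m) (ha : m ≤ a) (hb : m ≤ b) :
    |Real.sqrt a - Real.sqrt b| ≤ |a - b| / (2 * Real.sqrt m) := by
  have hsa : Real.sqrt m ≤ Real.sqrt a := Real.sqrt_le_sqrt ha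
  have hsb : Real.sqrt m ≤ Real.sqrt b := Real.sqrt_le_sqrt hb
  have hsm : 0 < Real.sqrt m := Real.sqrt_pos.2 hm
  have key : |Real.sqrt a - Real.sqrt b| * (Real.sqrt a + Real.sqrt b) = |a - b| := by
    rw [← abs_of_nonneg (by positivity : (0:ℝ) ≤ Real.sqrt a + Real.sqrt b), ← abs_mul]
    congr 1
    have h1 := Real.sq_sqrt (hm.le.trans ha)
    have h2 := Real.sq_sqrt (hm.le.trans hb)
    nlinarith
  rw [le_div_iff₀ (by positivity), ← key]
  exact mul_le_mul_of_nonneg_left (by linarith) (abs_nonneg _)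

section PhiFacts
variable {v : EuclideanSpace ℝ (Fin n)}
  (T : EuclideanSpace ℝ (Fin (n-1)) →ₗᵢ[ℝ] EuclideanSpace ℝ (Fin n))

def Phi (v : EuclideanSpace ℝ (Fin n))
    (T : EuclideanSpace ℝ (Fin (n-1)) →ₗᵢ[ℝ] EuclideanSpace ℝ (Fin n))
    (w : EuclideanSpace ℝ (Fin (n-1))) : EuclideanSpace ℝ (Fin n) :=
  T w + Real.sqrt (1 - ‖w‖^2) • v

lemma phi_diff (hv : ‖v‖ = 1) (hT : ∀ w, ⟪v, T w⟫ = 0) (w₁ w₂ : EuclideanSpace ℝ (Fin (n-1))) :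
    ‖Phi v T w₁ - Phi v T w₂‖ ^ 2 =
      ‖w₁ - w₂‖ ^ 2 + (Real.sqrt (1 - ‖w₁‖^2) - Real.sqrt (1 - ‖w₂‖^2)) ^ 2 := by
  have : Phi v T w₁ - Phi v T w₂ =
      T (w₁ - w₂) + (Real.sqrt (1 - ‖w₁‖^2) - Real.sqrt (1 - ‖w₂‖^2)) • v := by
    simp only [Phi, map_sub, sub_smul]; abel
  rw [this, pyth hv (hT _), T.norm_map]

lemma phi_norm (hv : ‖v‖ = 1) (hT : ∀ w, ⟪v, T w⟫ = 0)
    {w : EuclideanSpace ℝ (Fin (n-1))} (hw : ‖w‖ ≤ 1) : ‖Phi v T w‖ = 1 := by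
  have h0 : (0:ℝ) ≤ 1 - ‖w‖^2 := by nlinarith [norm_nonneg w]
  have : ‖Phi v T w‖ ^ 2 = 1 := by
    rw [Phi, pyth hv (hT _), T.norm_map, Real.sq_sqrt h0]; ring
  nlinarith [norm_nonneg (Phi v T w)]

lemma phi_antilip (hv : ‖v‖ = 1) (hT : ∀ w, ⟪v, T w⟫ = 0) :
    AntilipschitzWith 1 (Phi v T) := by
  rw [antilipschitzWith_iff_le_mul_dist]
  intro w₁ w₂
  rw [NNReal.coe_one, one_mul, dist_eq_norm, dist_eq_norm]
  have h := phi_diff T hv hT w₁ w₂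
  nlinarith [norm_nonneg (Phi v T w₁ - Phi v T w₂), norm_nonneg (w₁ - w₂),
    sq_nonneg (Real.sqrt (1 - ‖w₁‖^2) - Real.sqrt (1 - ‖w₂‖^2))]

lemma phi_lipschitzOn (hv : ‖v‖ = 1) {m : ℝ} (hm : 0 < m) (hm1 : m ≤ 1) :
    LipschitzOnWith (1 + Real.sqrt m⁻¹).toNNReal (Phi v T)
      (Metric.closedBall 0 (Real.sqrt (1 - m))) := by
  apply LipschitzOnWith.of_dist_le_mul
  intro w₁ h₁ w₂ h₂
  rw [Metric.mem_closedBall, dist_zero_right] at h₁ h₂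
  have hn1 : ‖w₁‖ ≤ 1 := h₁.trans (Real.sqrt_le_one.2 (by linarith))
  have hn2 : ‖w₂‖ ≤ 1 := h₂.trans (Real.sqrt_le_one.2 (by linarith))
  have hq1 : m ≤ 1 - ‖w₁‖^2 := by
    have := Real.sq_sqrt (by linarith : (0:ℝ) ≤ 1 - m)
    nlinarith [pow_le_pow_left₀ (norm_nonneg w₁) h₁ 2]
  have hq2 : m ≤ 1 - ‖w₂‖^2 := by
    have := Real.sq_sqrt (by linarith : (0:ℝ) ≤ 1 - m)
    nlinarith [pow_le_pow_left₀ (norm_nonneg w₂) h₂ 2]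
  have hs := sqrt_diff_le hm hq1 hq2
  have h3 := abs_norm_sub_norm_le w₁ w₂
  have h3a := abs_le.1 h3
  have habs : |(1 - ‖w₁‖^2) - (1 - ‖w₂‖^2)| ≤ 2 * ‖w₁ - w₂‖ := by
    rw [abs_le]
    constructor <;> nlinarith [norm_nonneg w₁, norm_nonneg w₂, norm_nonneg (w₁ - w₂)]
  have hKc : ((1 + Real.sqrt m⁻¹).toNNReal : ℝ) = 1 + Real.sqrt m⁻¹ :=
    Real.coe_toNNReal _ (by positivity)
  rw [dist_eq_norm, dist_eq_norm, hKc]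
  have hdiff : ‖Phi v T w₁ - Phi v T w₂‖ ≤ ‖w₁ - w₂‖ +
      |Real.sqrt (1 - ‖w₁‖^2) - Real.sqrt (1 - ‖w₂‖^2)| := by
    have heq : Phi v T w₁ - Phi v T w₂ =
        T (w₁ - w₂) + (Real.sqrt (1 - ‖w₁‖^2) - Real.sqrt (1 - ‖w₂‖^2)) • v := by
      simp only [Phi, map_sub, sub_smul]; abel
    rw [heq]
    refine (norm_add_le _ _).trans ?_
    rw [T.norm_map, norm_smul, hv, mul_one, Real.norm_eq_abs]
  have hsm : 0 < Real.sqrt m := Real.sqrt_pos.2 hm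
  have hinv : Real.sqrt m⁻¹ = (Real.sqrt m)⁻¹ := Real.sqrt_inv m
  have hstep : |Real.sqrt (1 - ‖w₁‖^2) - Real.sqrt (1 - ‖w₂‖^2)|
      ≤ Real.sqrt m⁻¹ * ‖w₁ - w₂‖ := by
    refine hs.trans ?_
    rw [div_le_iff₀ (by positivity)]
    refine habs.trans (le_of_eq ?_)
    rw [hinv]; field_simp
  nlinarith [norm_nonneg (w₁ - w₂)]

lemma phi_dist_v (hv : ‖v‖ = 1) (hT : ∀ w, ⟪v, T w⟫ = 0)
    {w : EuclideanSpace ℝ (Fin (n-1))} {ρ : ℝ} (hρ : ρ ≤ 1) (hw : ‖w‖ ≤ ρ) :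
    ‖Phi v T w - v‖ ≤ 2 * ρ := by
  have hρ0 : 0 ≤ ρ := (norm_nonneg w).trans hw
  have h0 : (0:ℝ) ≤ 1 - ‖w‖^2 := by nlinarith [norm_nonneg w]
  set s := Real.sqrt (1 - ‖w‖^2) with hs
  have hs0 : 0 ≤ s := Real.sqrt_nonneg _
  have hs1 : s ≤ 1 := Real.sqrt_le_one.2 (by nlinarith [norm_nonneg w])
  have hssq : s^2 = 1 - ‖w‖^2 := Real.sq_sqrt h0
  have hkey : ‖Phi v T w - v‖^2 = ‖w‖^2 + (s - 1)^2 := by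
    have heq : Phi v T w - v = T w + (s - 1) • v := by
      simp only [Phi, sub_smul, one_smul, ← hs]; abel
    rw [heq, pyth hv (hT _), T.norm_map]
  have h1s : 1 - s ≤ ‖w‖^2 := by nlinarith
  have hwρ : ‖w‖^2 ≤ ρ^2 := by nlinarith [norm_nonneg w]
  have hfin : ‖Phi v T w - v‖^2 ≤ (2*ρ)^2 := by nlinarith
  nlinarith [norm_nonneg (Phi v T w - v)]

lemma phi_covers (hv : ‖v‖ = 1) (hT : ∀ w, ⟪v, T w⟫ = 0)
    (hTsurj : ∀ x, ⟪v, x⟫ = 0 → ∃ w, T w = x)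
    {u : EuclideanSpace ℝ (Fin n)} (hu : ‖u‖ = 1) {τ : ℝ} (hτ : 0 < τ)
    (htu : τ ≤ ⟪v, u⟫) :
    u ∈ Phi v T '' Metric.closedBall 0 (Real.sqrt (1 - τ^2)) := by
  set t := ⟪v, u⟫ with ht
  have ht1 : t ≤ 1 := by
    have := real_inner_le_norm v u; rw [hv, hu] at this; simpa using this
  have hx : ⟪v, u - t • v⟫ = 0 := by
    rw [inner_sub_right, real_inner_smul_right, real_inner_self_eq_norm_sq, hv]
    ring
  obtain ⟨w, hw⟩ := hTsurj _ hx
  have hnw : ‖w‖^2 = 1 - t^2 := by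
    have h1 : ‖w‖ = ‖u - t • v‖ := by rw [← hw, T.norm_map]
    have h2 : ‖u - t • v‖^2 = 1 - t^2 := by
      rw [norm_sub_sq_real, real_inner_smul_right, real_inner_comm, ← ht,
        norm_smul, hv, hu]
      simp [Real.norm_eq_abs, sq_abs]; ring
    rw [h1, h2]
  refine ⟨w, ?_, ?_⟩
  · rw [Metric.mem_closedBall, dist_zero_right, show ‖w‖ = Real.sqrt (‖w‖^2) by
      rw [Real.sqrt_sq (norm_nonneg w)]]
    exact Real.sqrt_le_sqrt (by nlinarith)
  · rw [Phi, hw, hnw, show (1 - (1 - t^2)) = t^2 by ring, Real.sqrt_sq (by linarith)]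
    abel
end PhiFacts

lemma cap_fin (hn : 2 ≤ n) (v : EuclideanSpace ℝ (Fin n)) (hv : ‖v‖ = 1) :
    μH[(n:ℝ)-1] {u : EuclideanSpace ℝ (Fin n) |
      ‖u‖ = 1 ∧ Real.sqrt ((n:ℝ)⁻¹) ≤ ⟪v, u⟫} < ⊤ := by
  obtain ⟨T, hT, hTsurj⟩ := emb_exists hn v hv
  have hnpos : (0:ℝ) < (n:ℝ)⁻¹ := by positivity
  have hn1 : ((n:ℝ))⁻¹ ≤ 1 := by
    rw [inv_le_one_iff₀]; right; exact_mod_cast Nat.one_le_iff_ne_zero.2 (by omega)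
  have hτ : 0 < Real.sqrt ((n:ℝ)⁻¹) := Real.sqrt_pos.2 hnpos
  have hτsq : Real.sqrt ((n:ℝ)⁻¹) ^ 2 = (n:ℝ)⁻¹ := Real.sq_sqrt hnpos.le
  have hsub : {u : EuclideanSpace ℝ (Fin n) | ‖u‖ = 1 ∧ Real.sqrt ((n:ℝ)⁻¹) ≤ ⟪v, u⟫} ⊆
      Phi v T '' Metric.closedBall 0 (Real.sqrt (1 - (n:ℝ)⁻¹)) := by
    rintro u ⟨hu, htu⟩
    have := phi_covers T hv hT hTsurj hu hτ htu
    rwa [hτsq] at this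
  have hd0 : (0:ℝ) ≤ (n:ℝ) - 1 := by
    have : (2:ℝ) ≤ n := by exact_mod_cast hn
    linarith
  calc μH[(n:ℝ)-1] {u : EuclideanSpace ℝ (Fin n) |
        ‖u‖ = 1 ∧ Real.sqrt ((n:ℝ)⁻¹) ≤ ⟪v, u⟫}
      ≤ μH[(n:ℝ)-1] (Phi v T '' Metric.closedBall 0 (Real.sqrt (1 - (n:ℝ)⁻¹))) :=
        measure_mono hsub
    _ ≤ ((1 + (Real.sqrt ((n:ℝ)⁻¹))⁻¹).toNNReal : ℝ≥0∞) ^ ((n:ℝ)-1) *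
        μH[(n:ℝ)-1] (Metric.closedBall (0 : EuclideanSpace ℝ (Fin (n-1)))
          (Real.sqrt (1 - (n:ℝ)⁻¹))) := by
        have := (phi_lipschitzOn T hv hnpos hn1).hausdorffMeasure_image_le hd0
        rwa [Real.sqrt_inv] at this
    _ < ⊤ := by
        apply ENNReal.mul_lt_top
        · exact ENNReal.rpow_lt_top_of_nonneg hd0 ENNReal.coe_ne_top
        · haveI := haarE' (n-1)
          rw [hd_cast hn]
          exact (isCompact_closedBall _ _).measure_lt_top

lemma sphere_fin (hn : 2 ≤ n) :
    μH[(n:ℝ)-1] (Metric.sphere (0 : EuclideanSpace ℝ (Fin n)) 1) < ⊤ := by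
  set τ := Real.sqrt ((n:ℝ)⁻¹) with hτdef
  have hcover : Metric.sphere (0 : EuclideanSpace ℝ (Fin n)) 1 ⊆
      ⋃ p : Fin n × Bool, {u : EuclideanSpace ℝ (Fin n) | ‖u‖ = 1 ∧
        τ ≤ ⟪(if p.2 then (1:ℝ) else -1) • EuclideanSpace.single p.1 (1:ℝ), u⟫} := by
    intro u hu
    have hu1 : ‖u‖ = 1 := by simpa using hu
    have hsum : ∑ i, u i ^ 2 = 1 := by
      have := EuclideanSpace.norm_eq u
      rw [hu1] at this
      have h2 : (1:ℝ) = Real.sqrt (∑ i, ‖u i‖ ^ 2) := this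
      have h3 : ∑ i, ‖u i‖ ^ 2 = ∑ i, u i ^ 2 := by
        congr 1; ext i; rw [Real.norm_eq_abs, sq_abs]
      have h4 : (0:ℝ) ≤ ∑ i, u i ^ 2 := Finset.sum_nonneg (fun i _ => sq_nonneg (u i))
      nlinarith [Real.sq_sqrt (by positivity : (0:ℝ) ≤ ∑ i, ‖u i‖ ^ 2)]
    have hex : ∃ i, (n:ℝ)⁻¹ ≤ u i ^ 2 := by
      by_contra hcon
      push_neg at hcon
      have hlt : ∑ i, u i ^ 2 < ∑ _i : Fin n, (n:ℝ)⁻¹ :=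
        Finset.sum_lt_sum_of_nonempty (by simp [Finset.univ_nonempty_iff]; exact
          ⟨⟨0, by omega⟩⟩) (fun i _ => hcon i)
      rw [Finset.sum_const, Finset.card_univ, Fintype.card_fin, nsmul_eq_mul,
        mul_inv_cancel₀ (by positivity : ((n:ℝ)) ≠ 0)] at hlt
      linarith
    obtain ⟨i, hi⟩ := hex
    have habs : τ ≤ |u i| := by
      rw [hτdef, show |u i| = Real.sqrt (u i ^ 2) by rw [Real.sqrt_sq_eq_abs]]
      exact Real.sqrt_le_sqrt hi
    rcases le_or_gt 0 (u i) with hpos | hneg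
    · refine mem_iUnion.2 ⟨(i, true), hu1, ?_⟩
      simp only [if_true, one_smul]
      rw [EuclideanSpace.inner_single_left]
      simpa [abs_of_nonneg hpos] using habs
    · refine mem_iUnion.2 ⟨(i, false), hu1, ?_⟩
      have habs' : τ ≤ -(u i) := by rwa [abs_of_neg hneg] at habs
      simp only [if_neg Bool.false_ne_true, real_inner_smul_left]
      rw [EuclideanSpace.inner_single_left]
      simp only [map_one, one_mul]
      linarith
  refine (measure_mono hcover).trans_lt ?_
  refine (measure_iUnion_le _).trans_lt ?_
  rw [tsum_fintype]
  apply ENNReal.sum_lt_top.2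
  intro p _
  apply cap_fin hn
  rcases p with ⟨i, b⟩
  cases b <;> simp [norm_smul, EuclideanSpace.norm_single]

lemma cap_lower (hn : 2 ≤ n) (v : EuclideanSpace ℝ (Fin n)) (hv : ‖v‖ = 1)
    {ρ : ℝ} (h0 : 0 < ρ) (h1 : ρ ≤ 1) :
    ENNReal.ofReal (ρ^(n-1)) *
      μH[(n:ℝ)-1] (Metric.closedBall (0 : EuclideanSpace ℝ (Fin (n-1))) 1) ≤
      μH[(n:ℝ)-1] {u : EuclideanSpace ℝ (Fin n) | ‖u‖ = 1 ∧ ‖u - v‖ ≤ 2*ρ} := by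
  obtain ⟨T, hT, hTsurj⟩ := emb_exists hn v hv
  haveI := haarE' (n-1)
  have hd0 : (0:ℝ) ≤ (n:ℝ)-1 := by
    have : (2:ℝ) ≤ n := by exact_mod_cast hn
    linarith
  have himg : Phi v T '' Metric.closedBall 0 ρ ⊆
      {u : EuclideanSpace ℝ (Fin n) | ‖u‖ = 1 ∧ ‖u - v‖ ≤ 2*ρ} := by
    rintro _ ⟨w, hw, rfl⟩
    rw [Metric.mem_closedBall, dist_zero_right] at hw
    exact ⟨phi_norm T hv hT (hw.trans h1), phi_dist_v T hv hT h1 hw⟩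
  have step1 : μH[(n:ℝ)-1] (Metric.closedBall (0 : EuclideanSpace ℝ (Fin (n-1))) ρ) ≤
      μH[(n:ℝ)-1] (Phi v T '' Metric.closedBall 0 ρ) := by
    have := (phi_antilip T hv hT).le_hausdorffMeasure_image hd0 (Metric.closedBall 0 ρ)
    simpa [ENNReal.one_rpow] using this
  have step0 : μH[(n:ℝ)-1] (Metric.closedBall (0 : EuclideanSpace ℝ (Fin (n-1))) ρ) =
      ENNReal.ofReal (ρ^(n-1)) *
      μH[(n:ℝ)-1] (Metric.closedBall (0 : EuclideanSpace ℝ (Fin (n-1))) 1) := by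
    rw [hd_cast hn, Measure.addHaar_closedBall' _ _ h0.le, finrank_euclideanSpace_fin]
  calc ENNReal.ofReal (ρ^(n-1)) *
      μH[(n:ℝ)-1] (Metric.closedBall (0 : EuclideanSpace ℝ (Fin (n-1))) 1)
      = μH[(n:ℝ)-1] (Metric.closedBall (0 : EuclideanSpace ℝ (Fin (n-1))) ρ) := step0.symm
    _ ≤ μH[(n:ℝ)-1] (Phi v T '' Metric.closedBall 0 ρ) := step1
    _ ≤ _ := measure_mono himg

end Aux

/-- The support function `h(K,u) = sup_{x ∈ K} ⟨u,x⟩` of a set `K ⊆ ℝⁿ`. -/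
def suppFn {n : ℕ} (K : Set (EuclideanSpace ℝ (Fin n))) (u : EuclideanSpace ℝ (Fin n)) : ℝ :=
  sSup ((fun x => ⟪u, x⟫) '' K)

/-- The line `g_{x,u} = {x + t u : t ∈ ℝ}` through `x` with direction `u`. -/
def lineThrough {n : ℕ} (x u : EuclideanSpace ℝ (Fin n)) : Set (EuclideanSpace ℝ (Fin n)) :=
  {y | ∃ t : ℝ, y = x + t • u}

/-- The orthogonal projection `A|u^⊥` of a set `A` onto the hyperplane through the
origin orthogonal to the unit vector `u`. -/
def projPerp {n : ℕ} (u : EuclideanSpace ℝ (Fin n)) (A : Set (EuclideanSpace ℝ (Fin n))) :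
    Set (EuclideanSpace ℝ (Fin n)) :=
  (fun x => x - ⟪x, u⟫ • u) '' A

/-- `B ⊆ ℝⁿ` is `(n-1)`-dimensional rectifiable: it is `H^{n-1}`-measurable, has finite
`H^{n-1}` measure, and `H^{n-1}`-almost all of it is covered by countably many Lipschitz
images of `ℝ^{n-1}`. -/
def IsRectifiableCodim1 (n : ℕ) (B : Set (EuclideanSpace ℝ (Fin n))) : Prop :=
  NullMeasurableSet B μH[(n : ℝ) - 1] ∧ μH[(n : ℝ) - 1] B < ⊤ ∧
    ∃ f : ℕ → EuclideanSpace ℝ (Fin (n - 1)) → EuclideanSpace ℝ (Fin n),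
      (∀ i, ∃ C : ℝ≥0, LipschitzWith C (f i)) ∧
        μH[(n : ℝ) - 1] (B \ ⋃ i, Set.range (f i)) = 0

/-- `ω_n = H^{n-1}(S^{n-1})`, the surface area of the unit sphere in `ℝⁿ`. -/
def sphereArea (n : ℕ) : ℝ :=
  (μH[(n : ℝ) - 1] (Metric.sphere (0 : EuclideanSpace ℝ (Fin n)) 1)).toReal

/-- `κ_m`, the Lebesgue volume of the unit ball in `ℝ^m`. -/
def unitBallVol (m : ℕ) : ℝ :=
  (volume (Metric.closedBall (0 : EuclideanSpace ℝ (Fin m)) 1)).toReal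

/-- The mean width `w(K) = (1/ω_n) ∫_{S^{n-1}} (h(K,u) + h(K,-u)) dH^{n-1}(u)`. -/
def meanWidth {n : ℕ} (K : Set (EuclideanSpace ℝ (Fin n))) : ℝ :=
  (sphereArea n)⁻¹ *
    ∫ u in Metric.sphere (0 : EuclideanSpace ℝ (Fin n)) 1,
      (suppFn K u + suppFn K (-u)) ∂μH[(n : ℝ) - 1]

/-- The spherical bump estimate underlying Lemma 3.1: there is `c_n > 0` such that any
nonnegative `L`-Lipschitz function on `S^{n−1}` with supremum `δ ≤ L` satisfies
`∫_{S^{n−1}} f dH^{n−1} ≥ c_n·δⁿ/L^{n−1}`. -/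
theorem stmt_13 {n : ℕ} (hn : 2 ≤ n) :
    ∃ c : ℝ, 0 < c ∧
      ∀ L : ℝ, 0 < L →
        ∀ f : EuclideanSpace ℝ (Fin n) → ℝ,
          (∀ u, ‖u‖ = 1 → 0 ≤ f u) →
          (∀ u v, ‖u‖ = 1 → ‖v‖ = 1 → |f u - f v| ≤ L * ‖u - v‖) →
          (⨆ u : Metric.sphere (0 : EuclideanSpace ℝ (Fin n)) 1, f u) ≤ L →
          c * (⨆ u : Metric.sphere (0 : EuclideanSpace ℝ (Fin n)) 1, f u) ^ n
              / L ^ (n - 1) ≤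
            ∫ u in Metric.sphere (0 : EuclideanSpace ℝ (Fin n)) 1,
              f u ∂μH[(n : ℝ) - 1] := by
  classical
  set S := Metric.sphere (0 : EuclideanSpace ℝ (Fin n)) 1 with hSdef
  have hSne : S.Nonempty := ⟨EuclideanSpace.single ⟨0, by omega⟩ (1:ℝ), by
    rw [hSdef]
    exact mem_sphere_zero_iff_norm.2 (by rw [EuclideanSpace.norm_single]; norm_num)⟩
  haveI : Nonempty S := hSne.to_subtype
  have hSmeas : MeasurableSet S := Metric.isClosed_sphere.measurableSet
  have hfin := sphere_fin hn
  set A := μH[(n:ℝ)-1] (Metric.closedBall (0 : EuclideanSpace ℝ (Fin (n-1))) 1) with hAdef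
  have hA0 : A ≠ 0 := by
    haveI := haarE' (n-1)
    rw [hAdef, hd_cast hn]
    exact (Metric.measure_closedBall_pos _ _ one_pos).ne'
  have hAtop : A ≠ ⊤ := by
    haveI := haarE' (n-1)
    rw [hAdef, hd_cast hn]
    exact (isCompact_closedBall _ _).measure_lt_top.ne
  have hAr : 0 < A.toReal := ENNReal.toReal_pos hA0 hAtop
  refine ⟨A.toReal / (2 * 4^(n-1)), by positivity, ?_⟩
  intro L hL f hf0 hlip hδL
  set δ := ⨆ u : S, f (u : EuclideanSpace ℝ (Fin n)) with hδdef
  have hmem : ∀ u : S, ‖(u : EuclideanSpace ℝ (Fin n))‖ = 1 := fun u =>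
    mem_sphere_zero_iff_norm.1 u.2
  obtain ⟨u0, hu0⟩ := hSne
  have hbdd : BddAbove (range fun u : S => f (u : EuclideanSpace ℝ (Fin n))) := by
    refine ⟨f u0 + L * 2, ?_⟩
    rintro _ ⟨u, rfl⟩
    have h1 := hlip (u : EuclideanSpace ℝ (Fin n)) u0 (hmem u)
      (mem_sphere_zero_iff_norm.1 hu0)
    have h2 : ‖(u : EuclideanSpace ℝ (Fin n)) - u0‖ ≤ 2 := by
      calc ‖(u : EuclideanSpace ℝ (Fin n)) - u0‖
          ≤ ‖(u : EuclideanSpace ℝ (Fin n))‖ + ‖u0‖ := norm_sub_le _ _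
        _ = 2 := by rw [hmem u, mem_sphere_zero_iff_norm.1 hu0]; norm_num
    have := abs_le.1 h1
    have := mul_le_mul_of_nonneg_left h2 hL.le
    linarith
  have hδ0 : 0 ≤ δ := le_trans (hf0 u0 (mem_sphere_zero_iff_norm.1 hu0))
    (le_ciSup hbdd ⟨u0, hu0⟩)
  have hlipOn : LipschitzOnWith L.toNNReal f S := by
    apply LipschitzOnWith.of_dist_le_mul
    intro x hx y hy
    rw [Real.dist_eq, dist_eq_norm, Real.coe_toNNReal _ hL.le]
    exact hlip x y (mem_sphere_zero_iff_norm.1 hx) (mem_sphere_zero_iff_norm.1 hy)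
  have hcont : ContinuousOn f S := hlipOn.continuousOn
  -- integrability of f on the sphere
  have hint : IntegrableOn f S μH[(n:ℝ)-1] := by
    refine ⟨hcont.aestronglyMeasurable hSmeas,
      HasFiniteIntegral.restrict_of_bounded (C := L) hfin ?_⟩
    refine ae_restrict_of_forall_mem hSmeas fun u hu => ?_
    rw [Real.norm_eq_abs, abs_le]
    constructor
    · linarith [hf0 u (mem_sphere_zero_iff_norm.1 hu)]
    · exact le_trans (le_ciSup hbdd ⟨u, hu⟩) hδL
  rcases eq_or_lt_of_le hδ0 with hδz | hδpos
  · rw [← hδz, zero_pow (by omega : n ≠ 0), mul_zero, zero_div]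
    exact setIntegral_nonneg hSmeas fun u hu => hf0 u (mem_sphere_zero_iff_norm.1 hu)
  -- main case : δ > 0
  obtain ⟨v, hvS, hvmax⟩ := (isCompact_sphere (0 : EuclideanSpace ℝ (Fin n)) 1)
    |>.exists_isMaxOn ⟨u0, hu0⟩ hcont
  have hv1 : ‖v‖ = 1 := mem_sphere_zero_iff_norm.1 hvS
  have hδv : δ = f v := le_antisymm (ciSup_le fun u => hvmax u.2) (le_ciSup hbdd ⟨v, hvS⟩)
  set ρ := δ / (4 * L) with hρdef
  have h0ρ : 0 < ρ := by positivity
  have hρ1 : ρ ≤ 1 := by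
    rw [hρdef, div_le_one (by positivity)]
    nlinarith
  set cap := {u : EuclideanSpace ℝ (Fin n) | ‖u‖ = 1 ∧ ‖u - v‖ ≤ 2*ρ} with hcapdef
  have hcapS : cap ⊆ S := fun u hu => mem_sphere_zero_iff_norm.2 hu.1
  have hcap_meas : MeasurableSet cap := by
    have : cap = S ∩ Metric.closedBall v (2*ρ) := by
      ext u
      simp [hcapdef, hSdef, mem_sphere_zero_iff_norm, Metric.mem_closedBall,
        dist_eq_norm]
    rw [this]
    exact hSmeas.inter measurableSet_closedBall
  have hμcap := cap_lower hn v hv1 h0ρ hρ1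
  have hcapfin : μH[(n:ℝ)-1] cap < ⊤ := lt_of_le_of_lt (measure_mono hcapS) hfin
  have hflow : ∀ u ∈ cap, δ/2 ≤ f u := by
    rintro u ⟨hu1, hud⟩
    have h1 := hlip u v hu1 hv1
    have h2 : L * ‖u - v‖ ≤ L * (2*ρ) := mul_le_mul_of_nonneg_left hud hL.le
    have h3 : L * (2*ρ) = δ/2 := by rw [hρdef]; field_simp; ring
    have := abs_le.1 h1
    rw [hδv]
    linarith [hδv ▸ (le_refl δ)]
  -- chain of integral inequalities
  have hI1 : ∫ u in cap, f u ∂μH[(n:ℝ)-1] ≤ ∫ u in S, f u ∂μH[(n:ℝ)-1] := by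
    apply setIntegral_mono_set hint
    · exact ae_restrict_of_forall_mem hSmeas fun u hu =>
        hf0 u (mem_sphere_zero_iff_norm.1 hu)
    · exact HasSubset.Subset.eventuallyLE hcapS
  have hI2 : (μH[(n:ℝ)-1] cap).toReal * (δ/2) ≤ ∫ u in cap, f u ∂μH[(n:ℝ)-1] := by
    have hconst : IntegrableOn (fun _ => δ/2) cap μH[(n:ℝ)-1] :=
      integrableOn_const hcapfin.ne
    have := setIntegral_mono_on hconst (hint.mono_set hcapS) hcap_meas hflow
    rwa [setIntegral_const, smul_eq_mul] at this
  have hμcapr : ρ^(n-1) * A.toReal ≤ (μH[(n:ℝ)-1] cap).toReal := by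
    have h1 : (ENNReal.ofReal (ρ^(n-1)) * A).toReal ≤ (μH[(n:ℝ)-1] cap).toReal :=
      ENNReal.toReal_mono hcapfin.ne hμcap
    rwa [ENNReal.toReal_mul, ENNReal.toReal_ofReal (by positivity)] at h1
  have hfinal : A.toReal / (2 * 4^(n-1)) * δ^n / L^(n-1) = (δ/2) * (ρ^(n-1) * A.toReal) := by
    have hδn : δ^n = δ * δ^(n-1) := by
      conv_lhs => rw [show n = (n-1) + 1 by omega]
      rw [pow_succ']
    rw [hδn, hρdef, div_pow, mul_pow]
    field_simp
  rw [hfinal]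
  calc (δ/2) * (ρ^(n-1) * A.toReal)
      ≤ (δ/2) * (μH[(n:ℝ)-1] cap).toReal := by
        apply mul_le_mul_of_nonneg_left hμcapr (by positivity)
    _ = (μH[(n:ℝ)-1] cap).toReal * (δ/2) := by ring
    _ ≤ ∫ u in cap, f u ∂μH[(n:ℝ)-1] := hI2
    _ ≤ ∫ u in S, f u ∂μH[(n:ℝ)-1] := hI1
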